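/- With Γ as above, an element x = Σ_{i≥1}[i]·x_i ∈ Γ_s (s ≥ 2) lies in ker Sq^1 ∩ ker Sq^2 if and only if: x_1 ∈ ker Sq^2, x_2 = x_1Sq^1, x_3Sq^1 = x_1Sq^3, and for each m ≥ 1: x_{4m} = x_{4m−1}Sq^1, x_{4m+1} = x_{4m−1}Sq^2, x_{4m+2} = x_{4m−1}Sq^2Sq^1, and x_{4m+3}Sq^1 = x_{4m−1}Sq^2Sq^3. -/

import Mathlib

noncomputable section

/-- `Γ`: the free associative F₂-algebra on non-commuting generators `[a]`,
modelled as the monoid algebra of the free monoid on ℕ (only letters `a ≥ 1`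
are used; the Steenrod action never produces the letter `0` from them). -/
abbrev Gam : Type := MonoidAlgebra (ZMod 2) (FreeMonoid ℕ)

/-- The generator `[a]` of `Γ`. -/
def gen (a : ℕ) : Gam := MonoidAlgebra.single (FreeMonoid.ofList [a]) 1

/-- The right Steenrod action on a word, defined on generators by
`[a]Sq^i = C(a−i, i)·[a−i]` (mod 2) and extended by the Cartan formula. -/
def sqWord : List ℕ → ℕ → Gam
  | [], n => if n = 0 then 1 else 0
  | a :: w, n =>
      ∑ p ∈ Finset.range (n + 1),
        (Nat.choose (a - p) p : ZMod 2) • (gen (a - p) * sqWord w (n - p))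

/-- The right Steenrod action on `Γ`: `SqG n x = x·Sq^n`. -/
def SqG (n : ℕ) (x : Gam) : Gam :=
  Finsupp.sum x.coeff fun w c => c • sqWord (FreeMonoid.toList w) n

/-- `x` is homogeneous of length `s` (i.e. `x ∈ Γ_s`). -/
def homLen (s : ℕ) (x : Gam) : Prop :=
  ∀ w ∈ x.coeff.support, (FreeMonoid.toList w).length = s

-- basics
lemma addSelf (v : Gam) : v + v = 0 := by
  rw [← one_smul (ZMod 2) v, ← add_smul, show (1+1 : ZMod 2) = 0 by decide, zero_smul]

lemma char2_eq_iff (a b : Gam) : a = b ↔ a + b = 0 := by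
  constructor
  · rintro rfl; exact addSelf a
  · intro h
    have h2 : a + b + b = b := by rw [h, zero_add]
    rwa [add_assoc, addSelf, add_zero] at h2

lemma zsmul2 (v : Gam) : (2:ℤ) • v = 0 := by rw [two_zsmul]; exact addSelf v
lemma nsmul2 (v : Gam) : (2:ℕ) • v = 0 := by rw [two_nsmul]; exact addSelf v

def SqL (n : ℕ) : Gam →ₗ[ZMod 2] Gam :=
  (Finsupp.linearCombination (ZMod 2) (fun w => sqWord (FreeMonoid.toList w) n)).comp
    (MonoidAlgebra.coeffLinearEquiv (ZMod 2)).toLinearMap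

lemma SqG_eq (n : ℕ) (x : Gam) : SqG n x = SqL n x := rfl

lemma sq_zero (n : ℕ) : SqG n 0 = 0 := by rw [SqG_eq]; exact map_zero _
lemma sq_add (n : ℕ) (x y : Gam) : SqG n (x + y) = SqG n x + SqG n y := by
  rw [SqG_eq, SqG_eq, SqG_eq]; exact map_add _ _ _
lemma sq_smul (n : ℕ) (c : ZMod 2) (x : Gam) : SqG n (c • x) = c • SqG n x := by
  rw [SqG_eq, SqG_eq]; exact map_smul _ _ _

lemma sq_single (n : ℕ) (w : FreeMonoid ℕ) (c : ZMod 2) :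
    SqG n (MonoidAlgebra.single w c) = c • sqWord (FreeMonoid.toList w) n := by
  rw [SqG_eq]
  show Finsupp.linearCombination (ZMod 2) (fun w => sqWord (FreeMonoid.toList w) n) (Finsupp.single w c) = _
  rw [Finsupp.linearCombination_single]

lemma gen_mul_single (a : ℕ) (w : FreeMonoid ℕ) (c : ZMod 2) :
    gen a * MonoidAlgebra.single w c = MonoidAlgebra.single (FreeMonoid.ofList (a :: FreeMonoid.toList w)) c := by
  rw [gen, MonoidAlgebra.single_mul_single, one_mul]
  congr 1

lemma sq_gen_mul (n a : ℕ) (y : Gam) :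
    SqG n (gen a * y) =
      ∑ p ∈ Finset.range (n + 1),
        (Nat.choose (a - p) p : ZMod 2) • (gen (a - p) * SqG (n - p) y) := by
  induction y using MonoidAlgebra.induction_linear with
  | zero => simp [sq_zero]
  | add f g hf hg =>
      rw [mul_add, sq_add, hf, hg, ← Finset.sum_add_distrib]
      refine Finset.sum_congr rfl fun p _ => ?_
      rw [sq_add, mul_add, smul_add]
  | single w c =>
      rw [gen_mul_single, sq_single]
      have : FreeMonoid.toList (FreeMonoid.ofList (a :: FreeMonoid.toList w)) =
          a :: FreeMonoid.toList w := rfl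
      rw [this]
      rw [show sqWord (a :: FreeMonoid.toList w) n =
        ∑ p ∈ Finset.range (n + 1),
          (Nat.choose (a - p) p : ZMod 2) • (gen (a - p) * sqWord (FreeMonoid.toList w) (n - p)) from rfl]
      rw [Finset.smul_sum]
      refine Finset.sum_congr rfl fun p _ => ?_
      rw [sq_single, smul_comm c, mul_smul_comm]

lemma sqWord_zero (l : List ℕ) : sqWord l 0 = MonoidAlgebra.single (FreeMonoid.ofList l) 1 := by
  induction l with
  | nil => rfl
  | cons a w ih =>
      rw [show sqWord (a :: w) 0 = ∑ p ∈ Finset.range 1,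
        (Nat.choose (a - p) p : ZMod 2) • (gen (a - p) * sqWord w (0 - p)) from rfl]
      simp [ih, gen_mul_single]

lemma sq0 (y : Gam) : SqG 0 y = y := by
  rw [SqG]
  conv_rhs => rw [← MonoidAlgebra.sum_coeff_single y]
  refine Finsupp.sum_congr fun w _ => ?_
  rw [sqWord_zero]
  rw [show FreeMonoid.ofList (FreeMonoid.toList w) = w from rfl]
  rw [MonoidAlgebra.smul_single', mul_one]

def e1 (a : ℕ) : ZMod 2 := ((a-1).choose 1 : ℕ)
def e2 (a : ℕ) : ZMod 2 := ((a-2).choose 2 : ℕ)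
def e3 (a : ℕ) : ZMod 2 := ((a-3).choose 3 : ℕ)

lemma c1 (a : ℕ) (y : Gam) :
    SqG 1 (gen a * y) = gen a * SqG 1 y + e1 a • (gen (a-1) * y) := by
  rw [sq_gen_mul]
  rw [Finset.sum_range_succ, Finset.sum_range_one]
  simp [sq0, e1]

lemma c2 (a : ℕ) (y : Gam) :
    SqG 2 (gen a * y) = gen a * SqG 2 y + e1 a • (gen (a-1) * SqG 1 y)
      + e2 a • (gen (a-2) * y) := by
  rw [sq_gen_mul]
  rw [Finset.sum_range_succ, Finset.sum_range_succ, Finset.sum_range_one]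
  simp [sq0, e1, e2]

lemma c3 (a : ℕ) (y : Gam) :
    SqG 3 (gen a * y) = gen a * SqG 3 y + e1 a • (gen (a-1) * SqG 2 y)
      + e2 a • (gen (a-2) * SqG 1 y) + e3 a • (gen (a-3) * y) := by
  rw [sq_gen_mul]
  rw [Finset.sum_range_succ, Finset.sum_range_succ, Finset.sum_range_succ, Finset.sum_range_one]
  simp [sq0, e1, e2, e3]

lemma pe1 (b : ℕ) : e1 (b+5) = e1 (b+1) := by
  simp only [e1, show b+5-1 = b+4 from rfl, show b+1-1 = b from rfl]
  simp [Nat.choose]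
  push_cast
  generalize (b : ZMod 2) = X
  revert X
  decide

lemma pe2 (b : ℕ) : e2 (b+6) = e2 (b+2) := by
  simp only [e2, show b+6-2 = b+4 from rfl, show b+2-2 = b from rfl]
  simp [Nat.choose]
  push_cast
  generalize (b : ZMod 2) = X
  generalize ((b.choose 2 : ℕ) : ZMod 2) = Y
  revert X Y
  decide

lemma pe3 (b : ℕ) : e3 (b+7) = e3 (b+3) := by
  simp only [e3, show b+7-3 = b+4 from rfl, show b+3-3 = b from rfl]
  simp [Nat.choose]
  push_cast
  generalize (b : ZMod 2) = X
  generalize ((b.choose 2 : ℕ) : ZMod 2) = Y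
  generalize ((b.choose 3 : ℕ) : ZMod 2) = Z
  revert X Y Z
  decide

lemma e1_shift (a : ℕ) (h : 1 ≤ a) : e1 (a+4) = e1 a := by
  obtain ⟨b, rfl⟩ : ∃ b, a = b+1 := ⟨a-1, by omega⟩
  rw [show b+1+4 = b+5 by omega]; exact pe1 b

lemma e2_shift (a : ℕ) (h : 2 ≤ a) : e2 (a+4) = e2 a := by
  obtain ⟨b, rfl⟩ : ∃ b, a = b+2 := ⟨a-2, by omega⟩
  rw [show b+2+4 = b+6 by omega]; exact pe2 b

lemma e3_shift (a : ℕ) (h : 3 ≤ a) : e3 (a+4) = e3 a := by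
  obtain ⟨b, rfl⟩ : ∃ b, a = b+3 := ⟨a-3, by omega⟩
  rw [show b+3+4 = b+7 by omega]; exact pe3 b

lemma I1 (a : ℕ) : e1 a * e1 (a-1) = 0 := by
  induction a using Nat.strong_induction_on with
  | _ a ih =>
    rcases Nat.lt_or_ge a 8 with h8 | h8
    · interval_cases a <;> decide
    · obtain ⟨b, rfl⟩ : ∃ b, a = b+8 := ⟨a-8, by omega⟩
      have h := ih (b+4) (by omega)
      simp only [show b+4-1 = b+3 from rfl] at h
      simp only [show b+8-1 = b+7 from rfl]
      rw [show b+8 = (b+4)+4 by omega, e1_shift (b+4) (by omega),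
          show b+7 = (b+3)+4 by omega, e1_shift (b+3) (by omega)]
      exact h

lemma I2 (a : ℕ) : e1 a * e2 (a-1) = e3 a := by
  induction a using Nat.strong_induction_on with
  | _ a ih =>
    rcases Nat.lt_or_ge a 8 with h8 | h8
    · interval_cases a <;> decide
    · obtain ⟨b, rfl⟩ : ∃ b, a = b+8 := ⟨a-8, by omega⟩
      have h := ih (b+4) (by omega)
      simp only [show b+4-1 = b+3 from rfl] at h
      simp only [show b+8-1 = b+7 from rfl]
      rw [show b+8 = (b+4)+4 by omega, e1_shift (b+4) (by omega), e3_shift (b+4) (by omega),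
          show b+7 = (b+3)+4 by omega, e2_shift (b+3) (by omega)]
      exact h

lemma I3a (a : ℕ) : e2 a * e2 (a-2) = 0 := by
  induction a using Nat.strong_induction_on with
  | _ a ih =>
    rcases Nat.lt_or_ge a 8 with h8 | h8
    · interval_cases a <;> decide
    · obtain ⟨b, rfl⟩ : ∃ b, a = b+8 := ⟨a-8, by omega⟩
      have h := ih (b+4) (by omega)
      simp only [show b+4-2 = b+2 from rfl] at h
      simp only [show b+8-2 = b+6 from rfl]
      rw [show b+8 = (b+4)+4 by omega, e2_shift (b+4) (by omega),
          show b+6 = (b+2)+4 by omega, e2_shift (b+2) (by omega)]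
      exact h

lemma I3b (a : ℕ) : e3 a * e1 (a-3) = 0 := by
  induction a using Nat.strong_induction_on with
  | _ a ih =>
    rcases Nat.lt_or_ge a 8 with h8 | h8
    · interval_cases a <;> decide
    · obtain ⟨b, rfl⟩ : ∃ b, a = b+8 := ⟨a-8, by omega⟩
      have h := ih (b+4) (by omega)
      simp only [show b+4-3 = b+1 from rfl] at h
      simp only [show b+8-3 = b+5 from rfl]
      rw [show b+8 = (b+4)+4 by omega, e3_shift (b+4) (by omega),
          show b+5 = (b+1)+4 by omega, e1_shift (b+1) (by omega)]
      exact h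

lemma I4 (a : ℕ) : e3 a * e2 (a-3) = 0 := by
  induction a using Nat.strong_induction_on with
  | _ a ih =>
    rcases Nat.lt_or_ge a 9 with h9 | h9
    · interval_cases a <;> decide
    · obtain ⟨b, rfl⟩ : ∃ b, a = b+9 := ⟨a-9, by omega⟩
      have h := ih (b+5) (by omega)
      simp only [show b+5-3 = b+2 from rfl] at h
      simp only [show b+9-3 = b+6 from rfl]
      rw [show b+9 = (b+5)+4 by omega, e3_shift (b+5) (by omega),
          show b+6 = (b+2)+4 by omega, e2_shift (b+2) (by omega)]
      exact h

lemma twoMul (v : Gam) : 2 * v = 0 := by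
  rw [show (2:Gam) = 1 + 1 by norm_num, add_mul, one_mul]; exact addSelf v

lemma rels_single : ∀ l : List ℕ,
    SqG 1 (SqG 1 (MonoidAlgebra.single (FreeMonoid.ofList l) (1:ZMod 2))) = 0 ∧
    SqG 2 (SqG 1 (MonoidAlgebra.single (FreeMonoid.ofList l) (1:ZMod 2))) =
      SqG 3 (MonoidAlgebra.single (FreeMonoid.ofList l) (1:ZMod 2)) ∧
    SqG 2 (SqG 3 (MonoidAlgebra.single (FreeMonoid.ofList l) (1:ZMod 2))) = 0 ∧
    SqG 2 (SqG 2 (MonoidAlgebra.single (FreeMonoid.ofList l) (1:ZMod 2))) =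
      SqG 1 (SqG 3 (MonoidAlgebra.single (FreeMonoid.ofList l) (1:ZMod 2))) := by
  intro l
  induction l with
  | nil =>
      have h : ∀ n, SqG n (MonoidAlgebra.single (1 : FreeMonoid ℕ) (1:ZMod 2)) =
          if n = 0 then 1 else 0 := by
        intro n; rw [sq_single]; simp [sqWord]
      refine ⟨?_, ?_, ?_, ?_⟩ <;> simp [h, sq_zero]
  | cons a l ih =>
      obtain ⟨h1, h2, h3, h4⟩ := ih
      set u : Gam := MonoidAlgebra.single (FreeMonoid.ofList l) (1:ZMod 2) with hu
      have hy : MonoidAlgebra.single (FreeMonoid.ofList (a :: l)) (1:ZMod 2) = gen a * u :=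
        (gen_mul_single a (FreeMonoid.ofList l) 1).symm
      rw [hy]
      refine ⟨?_, ?_, ?_, ?_⟩
      · rw [char2_eq_iff]
        simp only [c1, c2, c3, sq_add, sq_smul, h1, h2, h3, h4, smul_add, smul_smul,
          mul_zero, smul_zero, add_zero, zero_add, sq_zero, Nat.sub_sub]
        simp only [I1, I2, I3a, I3b, I4, zero_smul, add_zero, zero_add]
        abel_nf
        simp only [zsmul2, nsmul2, twoMul, smul_zero, mul_zero, add_zero, zero_add]
      · rw [char2_eq_iff]
        simp only [c1, c2, c3, sq_add, sq_smul, h1, h2, h3, h4, smul_add, smul_smul,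
          mul_zero, smul_zero, add_zero, zero_add, sq_zero, Nat.sub_sub]
        simp only [I1, I2, I3a, I3b, I4, zero_smul, add_zero, zero_add]
        abel_nf
        simp only [zsmul2, nsmul2, twoMul, smul_zero, mul_zero, add_zero, zero_add]
      · rw [char2_eq_iff]
        simp only [c1, c2, c3, sq_add, sq_smul, h1, h2, h3, h4, smul_add, smul_smul,
          mul_zero, smul_zero, add_zero, zero_add, sq_zero, Nat.sub_sub]
        simp only [I1, I2, I3a, I3b, I4, zero_smul, add_zero, zero_add]
        abel_nf
        simp only [zsmul2, nsmul2, twoMul, smul_zero, mul_zero, add_zero, zero_add]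
      · rw [char2_eq_iff]
        simp only [c1, c2, c3, sq_add, sq_smul, h1, h2, h3, h4, smul_add, smul_smul,
          mul_zero, smul_zero, add_zero, zero_add, sq_zero, Nat.sub_sub]
        simp only [I1, I2, I3a, I3b, I4, zero_smul, add_zero, zero_add]
        abel_nf
        simp only [zsmul2, nsmul2, twoMul, smul_zero, mul_zero, add_zero, zero_add]


lemma zmod2_cases (c : ZMod 2) : c = 0 ∨ c = 1 := by fin_cases c; exacts [Or.inl rfl, Or.inr rfl]

lemma R1 (y : Gam) : SqG 1 (SqG 1 y) = 0 := by
  have h : (SqL 1).comp (SqL 1) = (0 : Gam →ₗ[ZMod 2] Gam) := by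
    apply MonoidAlgebra.lhom_ext'
    intro w; apply LinearMap.ext; intro c
    show SqG 1 (SqG 1 (MonoidAlgebra.single w c)) = 0
    rcases zmod2_cases c with rfl | rfl
    · rw [show (MonoidAlgebra.single w (0 : ZMod 2) : Gam) = 0 from MonoidAlgebra.single_zero w,
        sq_zero, sq_zero]
    · exact (rels_single (FreeMonoid.toList w)).1
  have := LinearMap.congr_fun h y
  simpa [SqG_eq] using this

lemma R2 (y : Gam) : SqG 2 (SqG 1 y) = SqG 3 y := by
  have h : (SqL 2).comp (SqL 1) = SqL 3 := by
    apply MonoidAlgebra.lhom_ext'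
    intro w; apply LinearMap.ext; intro c
    show SqG 2 (SqG 1 (MonoidAlgebra.single w c)) = SqG 3 (MonoidAlgebra.single w c)
    rcases zmod2_cases c with rfl | rfl
    · rw [show (MonoidAlgebra.single w (0 : ZMod 2) : Gam) = 0 from MonoidAlgebra.single_zero w,
        sq_zero, sq_zero, sq_zero]
    · exact (rels_single (FreeMonoid.toList w)).2.1
  have := LinearMap.congr_fun h y
  simpa [SqG_eq] using this

lemma R3 (y : Gam) : SqG 2 (SqG 3 y) = 0 := by
  have h : (SqL 2).comp (SqL 3) = (0 : Gam →ₗ[ZMod 2] Gam) := by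
    apply MonoidAlgebra.lhom_ext'
    intro w; apply LinearMap.ext; intro c
    show SqG 2 (SqG 3 (MonoidAlgebra.single w c)) = 0
    rcases zmod2_cases c with rfl | rfl
    · rw [show (MonoidAlgebra.single w (0 : ZMod 2) : Gam) = 0 from MonoidAlgebra.single_zero w,
        sq_zero, sq_zero]
    · exact (rels_single (FreeMonoid.toList w)).2.2.1
  have := LinearMap.congr_fun h y
  simpa [SqG_eq] using this

lemma R4 (y : Gam) : SqG 2 (SqG 2 y) = SqG 1 (SqG 3 y) := by
  have h : (SqL 2).comp (SqL 2) = (SqL 1).comp (SqL 3) := by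
    apply MonoidAlgebra.lhom_ext'
    intro w; apply LinearMap.ext; intro c
    show SqG 2 (SqG 2 (MonoidAlgebra.single w c)) = SqG 1 (SqG 3 (MonoidAlgebra.single w c))
    rcases zmod2_cases c with rfl | rfl
    · rw [show (MonoidAlgebra.single w (0 : ZMod 2) : Gam) = 0 from MonoidAlgebra.single_zero w,
        sq_zero, sq_zero, sq_zero, sq_zero]
    · exact (rels_single (FreeMonoid.toList w)).2.2.2
  have := LinearMap.congr_fun h y
  simpa [SqG_eq] using this

lemma gen_mul_eq (i : ℕ) (z : Gam) :
    (gen i * z).coeff = Finsupp.mapDomain (fun u => FreeMonoid.of i * u) z.coeff := by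
  induction z using MonoidAlgebra.induction_linear with
  | zero => simp
  | add f g hf hg => rw [mul_add, MonoidAlgebra.coeff_add, MonoidAlgebra.coeff_add, hf, hg,
      Finsupp.mapDomain_add]
  | single w c =>
    rw [gen, MonoidAlgebra.single_mul_single, one_mul, MonoidAlgebra.coeff_single,
      MonoidAlgebra.coeff_single, Finsupp.mapDomain_single]
    rfl

lemma of_mul_injective (i : ℕ) : Function.Injective (fun u : FreeMonoid ℕ => FreeMonoid.of i * u) := by
  intro u v huv
  exact mul_left_cancel huv

lemma gen_mul_apply (i : ℕ) (z : Gam) (j : ℕ) (w : FreeMonoid ℕ) :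
    (gen i * z).coeff (FreeMonoid.of j * w) = if i = j then z.coeff w else 0 := by
  rw [gen_mul_eq]
  rcases eq_or_ne i j with rfl | hij
  · rw [if_pos rfl]
    exact Finsupp.mapDomain_apply (of_mul_injective i) z.coeff w
  · rw [if_neg hij]
    apply Finsupp.mapDomain_notin_range
    rintro ⟨u, hu⟩
    have := congrArg FreeMonoid.toList hu
    simp only [FreeMonoid.toList_mul, FreeMonoid.toList_of] at this
    simp at this
    exact hij this.1

lemma sum_gen_eq_zero {N : ℕ} {y : ℕ → Gam}
    (h : ∑ j ∈ Finset.range N, gen j * y j = 0) :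
    ∀ j, j < N → y j = 0 := by
  intro j hj
  ext w
  have hc : (∑ i ∈ Finset.range N, gen i * y i).coeff (FreeMonoid.of j * w) = 0 := by
    rw [h]; rfl
  have hsum : (∑ i ∈ Finset.range N, gen i * y i).coeff (FreeMonoid.of j * w)
      = ∑ i ∈ Finset.range N, (gen i * y i).coeff (FreeMonoid.of j * w) := by
    rw [MonoidAlgebra.coeff_sum, Finsupp.finset_sum_apply]
  rw [hsum] at hc
  simp only [gen_mul_apply] at hc
  rw [Finset.sum_ite_eq' (Finset.range N) j (fun i => (y i).coeff w)] at hc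
  rw [if_pos (Finset.mem_range.2 hj)] at hc
  simpa using hc

lemma sq_sum (n : ℕ) (s : Finset ℕ) (f : ℕ → Gam) :
    SqG n (∑ i ∈ s, f i) = ∑ i ∈ s, SqG n (f i) := by
  rw [SqG_eq, map_sum]
  simp [SqG_eq]

lemma sq_decomp (x_ : ℕ → Gam) (N : ℕ) (hN : ∀ i, N ≤ i → x_ i = 0) (n : ℕ) :
    SqG n (∑ j ∈ Finset.range N, gen j * x_ j) =
      ∑ j ∈ Finset.range N, gen j *
        (∑ p ∈ Finset.range (n+1), ((j.choose p : ℕ) : ZMod 2) • SqG (n-p) (x_ (j+p))) := by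
  rw [sq_sum]
  have lhs_eq : ∀ i, SqG n (gen i * x_ i) =
      ∑ p ∈ Finset.range (n+1), (((i-p).choose p : ℕ) : ZMod 2) • (gen (i-p) * SqG (n-p) (x_ i)) :=
    fun i => sq_gen_mul n i (x_ i)
  simp only [lhs_eq]
  have rhs_eq : ∀ j, gen j * (∑ p ∈ Finset.range (n+1), ((j.choose p : ℕ) : ZMod 2) • SqG (n-p) (x_ (j+p)))
      = ∑ p ∈ Finset.range (n+1), ((j.choose p : ℕ) : ZMod 2) • (gen j * SqG (n-p) (x_ (j+p))) := by
    intro j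
    rw [Finset.mul_sum]
    exact Finset.sum_congr rfl fun p _ => (mul_smul_comm _ _ _)
  simp only [rhs_eq]
  rw [Finset.sum_comm, Finset.sum_comm (s := Finset.range N)]
  refine Finset.sum_congr rfl fun p _ => ?_
  -- fixed p
  have hzero : ∀ i, N ≤ i → (((i-p).choose p : ℕ) : ZMod 2) • (gen (i-p) * SqG (n-p) (x_ i)) = 0 := by
    intro i hi
    rw [hN i hi, sq_zero, mul_zero, smul_zero]
  have hext : ∑ i ∈ Finset.range N, (((i-p).choose p : ℕ) : ZMod 2) • (gen (i-p) * SqG (n-p) (x_ i))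
      = ∑ i ∈ Finset.range (p+N), (((i-p).choose p : ℕ) : ZMod 2) • (gen (i-p) * SqG (n-p) (x_ i)) := by
    apply Finset.sum_subset
    · exact Finset.range_subset_range.2 (by omega)
    · intro i hi hni
      exact hzero i (by simpa using hni)
  have h1 : ∑ i ∈ Finset.Ico 0 p, (((i-p).choose p : ℕ) : ZMod 2) • (gen (i-p) * SqG (n-p) (x_ i)) = 0 := by
    apply Finset.sum_eq_zero
    intro i hi
    simp only [Finset.mem_Ico] at hi
    have hip : i - p = 0 := by omega
    rw [hip, Nat.choose_eq_zero_of_lt (by omega : 0 < p)]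
    simp
  have h2 : ∑ i ∈ Finset.range (p+N), (((i-p).choose p : ℕ) : ZMod 2) • (gen (i-p) * SqG (n-p) (x_ i))
      = ∑ i ∈ Finset.Ico 0 p, (((i-p).choose p : ℕ) : ZMod 2) • (gen (i-p) * SqG (n-p) (x_ i))
      + ∑ i ∈ Finset.Ico p (p+N), (((i-p).choose p : ℕ) : ZMod 2) • (gen (i-p) * SqG (n-p) (x_ i)) := by
    rw [Finset.range_eq_Ico, ← Finset.sum_Ico_consecutive _ (Nat.zero_le p) (by omega : p ≤ p + N)]
  have h3 : ∑ i ∈ Finset.Ico p (p+N), (((i-p).choose p : ℕ) : ZMod 2) • (gen (i-p) * SqG (n-p) (x_ i))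
      = ∑ j ∈ Finset.range N, (((p+j-p).choose p : ℕ) : ZMod 2) • (gen (p+j-p) * SqG (n-p) (x_ (p+j))) := by
    rw [Finset.sum_Ico_eq_sum_range]
    simp only [show p + N - p = N by omega]
  rw [hext, h2, h1, zero_add, h3]
  refine Finset.sum_congr rfl fun j _ => ?_
  have e1 : p + j - p = j := by omega
  have e2 : p + j = j + p := by omega
  rw [e1, e2]

lemma cast4 (k r : ℕ) : ((4*k+r : ℕ) : ZMod 2) = ((r : ℕ) : ZMod 2) := by
  push_cast
  rw [show (4 : ZMod 2) = 0 by decide]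
  ring

lemma ch2_add4 (n : ℕ) : (((n+4).choose 2 : ℕ) : ZMod 2) = ((n.choose 2 : ℕ) : ZMod 2) := by
  simp [Nat.choose]
  push_cast
  generalize (n : ZMod 2) = X
  generalize ((n.choose 2 : ℕ) : ZMod 2) = Y
  revert X Y
  decide

lemma ch2_4k (k r : ℕ) : (((4*k+r).choose 2 : ℕ) : ZMod 2) = ((r.choose 2 : ℕ) : ZMod 2) := by
  induction k with
  | zero => norm_num
  | succ k ih => rw [show 4*(k+1)+r = (4*k+r)+4 by ring, ch2_add4, ih]

/-- An element `x = Σ_{i≥1}[i]·x_i ∈ Γ_s` (`s ≥ 2`) lies in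
`ker Sq¹ ∩ ker Sq²` if and only if: `x₁ ∈ ker Sq²`, `x₂ = x₁Sq¹`,
`x₃Sq¹ = x₁Sq³`, and for each `m ≥ 1`: `x_{4m} = x_{4m−1}Sq¹`,
`x_{4m+1} = x_{4m−1}Sq²`, `x_{4m+2} = x_{4m−1}Sq²Sq¹`, and
`x_{4m+3}Sq¹ = x_{4m−1}Sq²Sq³`. -/
theorem stmt_14 (s : ℕ) (hs : 2 ≤ s) (x : Gam) (x_ : ℕ → Gam)
    (hxlen : homLen s x) (hcomplen : ∀ i, homLen (s - 1) (x_ i))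
    (hfin : (Function.support x_).Finite) (h0 : x_ 0 = 0)
    (hx : x = ∑ᶠ i : ℕ, gen i * x_ i) :
    (SqG 1 x = 0 ∧ SqG 2 x = 0) ↔
      (SqG 2 (x_ 1) = 0 ∧
       x_ 2 = SqG 1 (x_ 1) ∧
       SqG 1 (x_ 3) = SqG 3 (x_ 1) ∧
       ∀ m : ℕ, 1 ≤ m →
         x_ (4 * m) = SqG 1 (x_ (4 * m - 1)) ∧
         x_ (4 * m + 1) = SqG 2 (x_ (4 * m - 1)) ∧
         x_ (4 * m + 2) = SqG 1 (SqG 2 (x_ (4 * m - 1))) ∧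
         SqG 1 (x_ (4 * m + 3)) = SqG 3 (SqG 2 (x_ (4 * m - 1)))) := by
  -- bound on the support
  obtain ⟨N, hN⟩ : ∃ N, ∀ i, N ≤ i → x_ i = 0 := by
    obtain ⟨B, hB⟩ := hfin.bddAbove
    refine ⟨B+1, fun i hi => ?_⟩
    by_contra hne
    have := hB (Function.mem_support.2 hne)
    omega
  have hx' : x = ∑ j ∈ Finset.range N, gen j * x_ j := by
    rw [hx]
    apply finsum_eq_sum_of_support_subset
    intro i hi
    simp only [Finset.coe_range, Set.mem_Iio]
    by_contra hge
    refine hi ?_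
    show gen i * x_ i = 0
    rw [hN i (by omega), mul_zero]
  set Z : ℕ → ℕ → Gam := fun n j =>
    ∑ p ∈ Finset.range (n+1), ((j.choose p : ℕ) : ZMod 2) • SqG (n-p) (x_ (j+p)) with hZdef
  have hSq : ∀ n, SqG n x = ∑ j ∈ Finset.range N, gen j * Z n j := by
    intro n
    rw [hx', sq_decomp x_ N hN n]
  have hiff : ∀ n, (SqG n x = 0 ↔ ∀ j, Z n j = 0) := by
    intro n
    constructor
    · intro h j
      rcases Nat.lt_or_ge j N with hj | hj
      · exact sum_gen_eq_zero ((hSq n).symm.trans h) j hj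
      · apply Finset.sum_eq_zero
        intro p _
        rw [hN (j+p) (by omega), sq_zero, smul_zero]
    · intro h
      rw [hSq n]
      apply Finset.sum_eq_zero
      intro j _
      rw [h j, mul_zero]
  have hZ1 : ∀ j, Z 1 j = SqG 1 (x_ j) + ((j : ℕ) : ZMod 2) • x_ (j+1) := by
    intro j
    rw [hZdef]
    simp only []
    rw [Finset.sum_range_succ, Finset.sum_range_one]
    simp [sq0, Nat.choose_one_right]
  have hZ2 : ∀ j, Z 2 j = SqG 2 (x_ j) + ((j : ℕ) : ZMod 2) • SqG 1 (x_ (j+1))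
      + ((j.choose 2 : ℕ) : ZMod 2) • x_ (j+2) := by
    intro j
    rw [hZdef]
    simp only []
    rw [Finset.sum_range_succ, Finset.sum_range_succ, Finset.sum_range_one]
    simp [sq0, Nat.choose_one_right]
  rw [hiff 1, hiff 2]
  constructor
  · rintro ⟨hA', hB'⟩
    have hA : ∀ j, SqG 1 (x_ j) + ((j : ℕ) : ZMod 2) • x_ (j+1) = 0 := fun j => by
      rw [← hZ1 j]; exact hA' j
    have hB : ∀ j, SqG 2 (x_ j) + ((j : ℕ) : ZMod 2) • SqG 1 (x_ (j+1))
        + ((j.choose 2 : ℕ) : ZMod 2) • x_ (j+2) = 0 := fun j => by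
      rw [← hZ2 j]; exact hB' j
    have e1c : ((1:ℕ) : ZMod 2) = 1 := by decide
    have e2c : ((2:ℕ) : ZMod 2) = 0 := by decide
    have e3c : ((3:ℕ) : ZMod 2) = 1 := by decide
    have hx2 : x_ 2 = SqG 1 (x_ 1) := by
      have h := hA 1
      rw [e1c, one_smul, show (1:ℕ)+1 = 2 from rfl] at h
      exact ((char2_eq_iff _ _).2 h).symm
    have hx4 : SqG 1 (x_ 3) = x_ 4 := by
      have h := hA 3
      rw [e3c, one_smul, show (3:ℕ)+1 = 4 from rfl] at h
      exact (char2_eq_iff _ _).2 h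
    have hsq2x1 : SqG 2 (x_ 1) = 0 := by
      have h := hB 1
      rw [e1c, one_smul, show ((Nat.choose 1 2 : ℕ) : ZMod 2) = 0 by decide, zero_smul,
        add_zero, show (1:ℕ)+1 = 2 from rfl, hx2, R1, add_zero] at h
      exact h
    have hsq24 : SqG 2 (x_ 2) = x_ 4 := by
      have h := hB 2
      rw [e2c, zero_smul, add_zero, show ((Nat.choose 2 2 : ℕ) : ZMod 2) = 1 by decide,
        one_smul, show (2:ℕ)+2 = 4 from rfl] at h
      exact (char2_eq_iff _ _).2 h
    have hx3 : SqG 1 (x_ 3) = SqG 3 (x_ 1) := by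
      rw [hx4, ← hsq24, hx2, R2]
    refine ⟨hsq2x1, hx2, hx3, ?_⟩
    intro m hm
    obtain ⟨k, rfl⟩ : ∃ k, m = k+1 := ⟨m-1, by omega⟩
    have c43 : ((4*k+3 : ℕ) : ZMod 2) = 1 := by rw [cast4]; decide
    have c44 : ((4*k+4 : ℕ) : ZMod 2) = 0 := by rw [cast4]; decide
    have c45 : ((4*k+5 : ℕ) : ZMod 2) = 1 := by rw [cast4]; decide
    have c46 : ((4*k+6 : ℕ) : ZMod 2) = 0 := by rw [cast4]; decide
    have c47 : ((4*k+7 : ℕ) : ZMod 2) = 1 := by rw [cast4]; decide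
    have d43 : (((4*k+3).choose 2 : ℕ) : ZMod 2) = 1 := by rw [ch2_4k]; decide
    have d46 : (((4*k+6).choose 2 : ℕ) : ZMod 2) = 1 := by rw [ch2_4k]; decide
    have GA : SqG 1 (x_ (4*k+3)) = x_ (4*k+4) := by
      have h := hA (4*k+3)
      rw [c43, one_smul, show 4*k+3+1 = 4*k+4 by omega] at h
      exact (char2_eq_iff _ _).2 h
    have GB : x_ (4*k+5) = SqG 2 (x_ (4*k+3)) := by
      have h := hB (4*k+3)
      rw [c43, one_smul, d43, one_smul, show 4*k+3+1 = 4*k+4 by omega,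
        show 4*k+3+2 = 4*k+5 by omega, ← GA, R1, add_zero] at h
      exact ((char2_eq_iff _ _).2 h).symm
    have GC : x_ (4*k+6) = SqG 1 (SqG 2 (x_ (4*k+3))) := by
      have h := hA (4*k+5)
      rw [c45, one_smul, show 4*k+5+1 = 4*k+6 by omega] at h
      rw [← (char2_eq_iff _ _).2 h, GB]
    have GD' : SqG 1 (x_ (4*k+7)) = x_ (4*k+8) := by
      have h := hA (4*k+7)
      rw [c47, one_smul, show 4*k+7+1 = 4*k+8 by omega] at h
      exact (char2_eq_iff _ _).2 h
    have GD : SqG 1 (x_ (4*k+7)) = SqG 3 (SqG 2 (x_ (4*k+3))) := by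
      have h := hB (4*k+6)
      rw [c46, zero_smul, add_zero, d46, one_smul, show 4*k+6+2 = 4*k+8 by omega] at h
      have hx8 : SqG 2 (x_ (4*k+6)) = x_ (4*k+8) := (char2_eq_iff _ _).2 h
      rw [GD', ← hx8, GC, R2]
    rw [show 4*(k+1) = 4*k+4 by ring, show 4*k+4-1 = 4*k+3 by omega,
      show 4*k+4+1 = 4*k+5 by omega, show 4*k+4+2 = 4*k+6 by omega,
      show 4*k+4+3 = 4*k+7 by omega]
    exact ⟨GA.symm, GB, GC, GD⟩
  · rintro ⟨H1, H2, H3, H4⟩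
    have HA : ∀ k, x_ (4*k+4) = SqG 1 (x_ (4*k+3)) := by
      intro k
      have h := (H4 (k+1) (by omega)).1
      rwa [show 4*(k+1) = 4*k+4 by ring, show 4*k+4-1 = 4*k+3 by omega] at h
    have HB : ∀ k, x_ (4*k+5) = SqG 2 (x_ (4*k+3)) := by
      intro k
      have h := (H4 (k+1) (by omega)).2.1
      rwa [show 4*(k+1)+1 = 4*k+5 by ring, show 4*(k+1)-1 = 4*k+3 by omega] at h
    have HC : ∀ k, x_ (4*k+6) = SqG 1 (SqG 2 (x_ (4*k+3))) := by
      intro k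
      have h := (H4 (k+1) (by omega)).2.2.1
      rwa [show 4*(k+1)+2 = 4*k+6 by ring, show 4*(k+1)-1 = 4*k+3 by omega] at h
    have HD : ∀ k, SqG 1 (x_ (4*k+7)) = SqG 3 (SqG 2 (x_ (4*k+3))) := by
      intro k
      have h := (H4 (k+1) (by omega)).2.2.2
      rwa [show 4*(k+1)+3 = 4*k+7 by ring, show 4*(k+1)-1 = 4*k+3 by omega] at h
    have h4 : x_ 4 = SqG 1 (x_ 3) := by
      have := HA 0
      rwa [show 4*0+4 = 4 by norm_num, show 4*0+3 = 3 by norm_num] at this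
    have h5 : x_ 5 = SqG 2 (x_ 3) := by
      have := HB 0
      rwa [show 4*0+5 = 5 by norm_num, show 4*0+3 = 3 by norm_num] at this
    have h8 : ∀ k, x_ (4*k+8) = SqG 1 (x_ (4*k+7)) := by
      intro k
      have := HA (k+1)
      rwa [show 4*(k+1)+4 = 4*k+8 by ring, show 4*(k+1)+3 = 4*k+7 by ring] at this
    have h9 : ∀ k, x_ (4*k+9) = SqG 2 (x_ (4*k+7)) := by
      intro k
      have := HB (k+1)
      rwa [show 4*(k+1)+5 = 4*k+9 by ring, show 4*(k+1)+3 = 4*k+7 by ring] at this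
    have G3 : ∀ k, SqG 3 (x_ (4*k+3)) = 0 := by
      intro k
      cases k with
      | zero =>
          rw [show 4*0+3 = 3 by norm_num, ← R2, H3]
          exact R3 (x_ 1)
      | succ k =>
          rw [show 4*(k+1)+3 = 4*k+7 by ring, ← R2, HD k]
          exact R3 _
    have hA : ∀ j, SqG 1 (x_ j) + ((j : ℕ) : ZMod 2) • x_ (j+1) = 0 := by
      intro j
      rcases Nat.lt_or_ge j 4 with hj | hj
      · interval_cases j
        · rw [h0, sq_zero, Nat.cast_zero, zero_smul, add_zero]
        · rw [show ((1:ℕ) : ZMod 2) = 1 by decide, one_smul, show (1:ℕ)+1 = 2 from rfl, H2]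
          exact addSelf _
        · rw [show ((2:ℕ) : ZMod 2) = 0 by decide, zero_smul, add_zero, H2, R1]
        · rw [show ((3:ℕ) : ZMod 2) = 1 by decide, one_smul, show (3:ℕ)+1 = 4 from rfl, h4]
          exact addSelf _
      · obtain ⟨k, rfl | rfl | rfl | rfl⟩ :
            ∃ k, j = 4*k+4 ∨ j = 4*k+5 ∨ j = 4*k+6 ∨ j = 4*k+7 := ⟨(j-4)/4, by omega⟩
        · rw [show ((4*k+4 : ℕ) : ZMod 2) = 0 by rw [cast4]; decide, zero_smul, add_zero,
            HA k, R1]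
        · rw [show ((4*k+5 : ℕ) : ZMod 2) = 1 by rw [cast4]; decide, one_smul,
            show 4*k+5+1 = 4*k+6 by omega, HB k, HC k]
          exact addSelf _
        · rw [show ((4*k+6 : ℕ) : ZMod 2) = 0 by rw [cast4]; decide, zero_smul, add_zero,
            HC k, R1]
        · rw [show ((4*k+7 : ℕ) : ZMod 2) = 1 by rw [cast4]; decide, one_smul,
            show 4*k+7+1 = 4*k+8 by omega, HD k, h8 k, HD k]
          exact addSelf _
    have hB : ∀ j, SqG 2 (x_ j) + ((j : ℕ) : ZMod 2) • SqG 1 (x_ (j+1))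
        + ((j.choose 2 : ℕ) : ZMod 2) • x_ (j+2) = 0 := by
      intro j
      rcases Nat.lt_or_ge j 4 with hj | hj
      · interval_cases j
        · rw [h0, sq_zero, Nat.cast_zero, zero_smul,
            show ((Nat.choose 0 2 : ℕ) : ZMod 2) = 0 by decide, zero_smul, add_zero, add_zero]
        · rw [H1, zero_add, show ((1:ℕ) : ZMod 2) = 1 by decide, one_smul,
            show (1:ℕ)+1 = 2 from rfl, H2, R1, zero_add,
            show ((Nat.choose 1 2 : ℕ) : ZMod 2) = 0 by decide, zero_smul]
        · rw [show ((2:ℕ) : ZMod 2) = 0 by decide, zero_smul, add_zero,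
            show ((Nat.choose 2 2 : ℕ) : ZMod 2) = 1 by decide, one_smul,
            show (2:ℕ)+2 = 4 from rfl, H2, R2, ← H3, h4]
          exact addSelf _
        · rw [show ((3:ℕ) : ZMod 2) = 1 by decide, one_smul, show (3:ℕ)+1 = 4 from rfl,
            h4, R1, add_zero, show ((Nat.choose 3 2 : ℕ) : ZMod 2) = 1 by decide, one_smul,
            show (3:ℕ)+2 = 5 from rfl, h5]
          exact addSelf _
      · obtain ⟨k, rfl | rfl | rfl | rfl⟩ :
            ∃ k, j = 4*k+4 ∨ j = 4*k+5 ∨ j = 4*k+6 ∨ j = 4*k+7 := ⟨(j-4)/4, by omega⟩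
        · rw [show ((4*k+4 : ℕ) : ZMod 2) = 0 by rw [cast4]; decide, zero_smul, add_zero,
            show (((4*k+4).choose 2 : ℕ) : ZMod 2) = 0 by rw [ch2_4k]; decide, zero_smul,
            add_zero, HA k, R2, G3 k]
        · rw [show ((4*k+5 : ℕ) : ZMod 2) = 1 by rw [cast4]; decide, one_smul,
            show (((4*k+5).choose 2 : ℕ) : ZMod 2) = 0 by rw [ch2_4k]; decide, zero_smul,
            add_zero, show 4*k+5+1 = 4*k+6 by omega, HC k, R1, add_zero, HB k, R4, G3 k,
            sq_zero]
        · rw [show ((4*k+6 : ℕ) : ZMod 2) = 0 by rw [cast4]; decide, zero_smul, add_zero,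
            show (((4*k+6).choose 2 : ℕ) : ZMod 2) = 1 by rw [ch2_4k]; decide, one_smul,
            show 4*k+6+2 = 4*k+8 by omega, HC k, R2, ← HD k, h8 k]
          exact addSelf _
        · rw [show ((4*k+7 : ℕ) : ZMod 2) = 1 by rw [cast4]; decide, one_smul,
            show (((4*k+7).choose 2 : ℕ) : ZMod 2) = 1 by rw [ch2_4k]; decide, one_smul,
            show 4*k+7+1 = 4*k+8 by omega, show 4*k+7+2 = 4*k+9 by omega,
            h8 k, R1, add_zero, h9 k]
          exact addSelf _
    constructor
    · intro j; rw [hZ1 j]; exact hA j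
    · intro j; rw [hZ2 j]; exact hB j
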